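/- Let k be a field, n ≥ 1, a_0, …, a_{n−1} ∈ k, and L(y) = ∂ⁿ(y) + Σ_{i=0}^{n−1} a_i·∂ⁱ(y). Let y_1, …, y_n ∈ Hk be k-linearly independent solutions of L(y) = 0 and let B ∈ M(n,k) be the matrix with ∂(y_j) = Σ_i y_i·B_{ij}. Then the matrices I, B, B², …, B^{n−1} are linearly independent over k (indeed over the algebraic closure k̄), and Span_k{Bᵐ : m ∈ ℕ} = Span_k{I, B, …, B^{n−1}}. -/

import Mathlib

open scoped BigOperators

set_option linter.unusedSectionVars false

/-- The ring of Hurwitz series over `R`: all sequences `ℕ → R`, with termwise addition and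
the Hurwitz (binomial-convolution) product. -/
def HS (R : Type*) : Type _ := ℕ → R

namespace HS

variable {R : Type*} [CommRing R]

instance : AddCommGroup (HS R) := Pi.addCommGroup

instance {S : Type*} [Semiring S] [Module S R] : Module S (HS R) :=
  Pi.module ℕ (fun _ => R) S

@[simp] theorem add_apply (a b : HS R) (n : ℕ) : (a + b) n = a n + b n := rfl
@[simp] theorem zero_apply (n : ℕ) : (0 : HS R) n = 0 := rfl
@[simp] theorem smul_apply {S : Type*} [Semiring S] [Module S R] (c : S) (a : HS R) (n : ℕ) :
    (c • a) n = c • a n := rfl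

instance : Mul (HS R) :=
  ⟨fun a b n => ∑ j ∈ Finset.range (n + 1), (n.choose j : R) * a j * b (n - j)⟩

theorem mul_apply (a b : HS R) (n : ℕ) :
    (a * b) n = ∑ j ∈ Finset.range (n + 1), (n.choose j : R) * a j * b (n - j) := rfl

instance : One (HS R) := ⟨fun n => if n = 0 then 1 else 0⟩

theorem one_apply (n : ℕ) : (1 : HS R) n = if n = 0 then 1 else 0 := rfl

private theorem hmul_comm (a b : HS R) : a * b = b * a := by
  funext n
  rw [mul_apply, mul_apply, ← Finset.sum_range_reflect]
  refine Finset.sum_congr rfl fun j hj => ?_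
  have hj' : j ≤ n := Nat.lt_succ_iff.mp (Finset.mem_range.mp hj)
  have h1 : n + 1 - 1 - j = n - j := by omega
  rw [h1, Nat.choose_symm hj', Nat.sub_sub_self hj']
  ring

private theorem hone_mul (a : HS R) : 1 * a = a := by
  funext n
  rw [mul_apply]
  rw [Finset.sum_eq_single 0]
  · simp [one_apply]
  · intro j hj hj0
    simp [one_apply, hj0]
  · intro h
    exact absurd (Finset.mem_range.mpr (Nat.succ_pos n)) h

private theorem hmul_assoc (a b c : HS R) : a * b * c = a * (b * c) := by
  funext n
  rw [mul_apply, mul_apply]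
  simp_rw [mul_apply, Finset.mul_sum]
  simp_rw [Finset.sum_mul]
  rw [Finset.sum_sigma', Finset.sum_sigma']
  refine Finset.sum_nbij' (fun x => ⟨x.2, x.1 - x.2⟩) (fun x => ⟨x.1 + x.2, x.1⟩)
    ?_ ?_ ?_ ?_ ?_
  · rintro ⟨p, i⟩ h
    simp only [Finset.mem_sigma, Finset.mem_range] at h ⊢
    omega
  · rintro ⟨i, j⟩ h
    simp only [Finset.mem_sigma, Finset.mem_range] at h ⊢
    omega
  · rintro ⟨p, i⟩ h
    simp only [Finset.mem_sigma, Finset.mem_range] at h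
    dsimp only
    exact congrArg (fun m => (⟨m, i⟩ : Σ _ : ℕ, ℕ)) (by omega)
  · rintro ⟨i, j⟩ h
    simp only [Finset.mem_sigma, Finset.mem_range] at h
    dsimp only
    exact congrArg (fun m => (⟨i, m⟩ : Σ _ : ℕ, ℕ)) (by omega)
  · rintro ⟨p, i⟩ h
    simp only [Finset.mem_sigma, Finset.mem_range] at h
    have hip : i ≤ p := by omega
    have hpn : p ≤ n := by omega
    have h2 : n - i - (p - i) = n - p := by omega
    have h3 : (n.choose p : R) * (p.choose i : R)
        = (n.choose i : R) * ((n - i).choose (p - i) : R) := by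
      rw [← Nat.cast_mul, ← Nat.cast_mul, Nat.choose_mul hip]
    simp only [h2]
    calc ((n.choose p : R) * ((p.choose i : R) * a i * b (p - i)) * c (n - p))
        = ((n.choose p : R) * (p.choose i : R)) * (a i * b (p - i) * c (n - p)) := by ring
      _ = ((n.choose i : R) * ((n - i).choose (p - i) : R)) * (a i * b (p - i) * c (n - p)) := by
          rw [h3]
      _ = (n.choose i : R) * a i * (((n - i).choose (p - i) : R) * b (p - i) * c (n - p)) := by
          ring

instance : CommRing (HS R) :=
  { (inferInstance : AddCommGroup (HS R)) with
    mul := (· * ·)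
    one := (1 : HS R)
    mul_assoc := hmul_assoc
    one_mul := hone_mul
    mul_one := fun a => by rw [hmul_comm]; exact hone_mul a
    left_distrib := fun a b c => by
      funext n
      simp only [mul_apply, add_apply]
      rw [← Finset.sum_add_distrib]
      exact Finset.sum_congr rfl fun j _ => by ring
    right_distrib := fun a b c => by
      funext n
      simp only [mul_apply, add_apply]
      rw [← Finset.sum_add_distrib]
      exact Finset.sum_congr rfl fun j _ => by ring
    zero_mul := fun a => by funext n; simp [mul_apply]
    mul_zero := fun a => by funext n; simp [mul_apply]
    mul_comm := hmul_comm }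

/-- The derivation `∂` on Hurwitz series: the left-shift. -/
def D (a : HS R) : HS R := fun n => a (n + 1)

@[simp] theorem D_apply (a : HS R) (n : ℕ) : D a n = a (n + 1) := rfl

/-- The exponential `exp β = (1, β, β², …)`. -/
def hexp (b : R) : HS R := fun n => b ^ n

@[simp] theorem hexp_apply (b : R) (n : ℕ) : hexp b n = b ^ n := rfl

/-- The divided power `x^{[i]}`: the sequence with `1` in position `i` and `0` elsewhere. -/
def dpow (i : ℕ) : HS R := fun n => if n = i then 1 else 0

/-- The constant Hurwitz series `(r, 0, 0, …)`. -/
def const (r : R) : HS R := fun n => if n = 0 then r else 0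

/-- Entrywise map of a Hurwitz series along a map of coefficients. -/
def map {K L : Type*} (f : K → L) (a : HS K) : HS L := fun n => f (a n)

/-- `σ` is a differential automorphism of the subspace `V` of `HS k`:
a `k`-linear automorphism of `V` commuting with the derivation `D`. -/
def IsDiffAut {k : Type*} [Field k] (V : Submodule k (HS k)) (σ : V ≃ₗ[k] V) : Prop :=
  ∀ v w : V, (w : HS k) = D (v : HS k) → (σ w : HS k) = D (σ v : HS k)

end HS

/-- The nilpotent upper Jordan block of size `m` (ones on the superdiagonal). -/
def jordanBlock (k : Type*) [Field k] (m : ℕ) : Matrix (Fin m) (Fin m) k :=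
  Matrix.of fun i j => if (i : ℕ) + 1 = (j : ℕ) then 1 else 0

/-- The centralizer of a matrix `A` inside `GL(m, k)`, as a set of matrices. -/
def matCent {k : Type*} [Field k] {m : ℕ} (A : Matrix (Fin m) (Fin m) k) :
    Set (Matrix (Fin m) (Fin m) k) :=
  {T | IsUnit T ∧ A * T = T * A}

/-- The group `U(m, k)` of upper triangular matrices in `GL(m, k)` with all diagonal
entries equal to `1`, as a set of matrices. -/
def uniUpper (k : Type*) [Field k] (m : ℕ) : Set (Matrix (Fin m) (Fin m) k) :=
  {T | IsUnit T ∧ (∀ i, T i i = 1) ∧ ∀ i j : Fin m, (j : ℕ) < (i : ℕ) → T i j = 0}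

section Aux

open HS

variable {k : Type*} [Field k] {n : ℕ}

/-- The derivation `D` as a linear map. -/
def Dlin (k : Type*) [CommRing k] : HS k →ₗ[k] HS k where
  toFun := HS.D
  map_add' _ _ := rfl
  map_smul' _ _ := rfl

theorem hs_sum_apply {ι : Type*} (s : Finset ι) (f : ι → HS k) (t : ℕ) :
    (∑ j ∈ s, f j) t = ∑ j ∈ s, f j t := by
  induction s using Finset.cons_induction with
  | empty => rfl
  | cons a s ha ih => rw [Finset.sum_cons, Finset.sum_cons, HS.add_apply, ih]

theorem D_iter_apply (z : HS k) (m t : ℕ) : (HS.D^[m] z) t = z (t + m) := by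
  induction m generalizing t with
  | zero => rfl
  | succ m ih =>
    rw [Function.iterate_succ', Function.comp_apply]
    show (HS.D^[m] z) (t + 1) = _
    rw [ih]
    congr 1
    omega

theorem D_iter_eq (y : Fin n → HS k) (B : Matrix (Fin n) (Fin n) k)
    (hB : ∀ j, HS.D (y j) = ∑ i, B i j • y i) (m : ℕ) (j : Fin n) :
    HS.D^[m] (y j) = ∑ i, (B ^ m) i j • y i := by
  induction m with
  | zero =>
    simp only [Function.iterate_zero, id_eq, pow_zero]
    rw [Finset.sum_eq_single j]
    · simp [Matrix.one_apply]
    · intro i _ hij; simp [Matrix.one_apply, hij]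
    · simp
  | succ m ih =>
    rw [Function.iterate_succ', Function.comp_apply, ih]
    have : HS.D (∑ i, (B ^ m) i j • y i) = ∑ i, (B ^ m) i j • HS.D (y i) := by
      rw [show HS.D (∑ i, (B ^ m) i j • y i) = Dlin k (∑ i, (B ^ m) i j • y i) from rfl]
      rw [map_sum]
      simp only [map_smul]
      rfl
    rw [this]
    simp only [hB]
    simp only [Finset.smul_sum, smul_smul]
    rw [Finset.sum_comm]
    refine Finset.sum_congr rfl fun l _ => ?_
    rw [← Finset.sum_smul, pow_succ']
    congr 1
    rw [Matrix.mul_apply]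
    exact Finset.sum_congr rfl fun i _ => mul_comm _ _

theorem aux_indep (y : Fin n → HS k) (hind : LinearIndependent k y)
    (B : Matrix (Fin n) (Fin n) k)
    (hB : ∀ j, HS.D (y j) = ∑ i, B i j • y i) :
    LinearIndependent k (fun i : Fin n => B ^ (i : ℕ)) := by
  classical
  by_contra hcon
  rw [Fintype.not_linearIndependent_iff] at hcon
  obtain ⟨g, hg, i₀, hi₀⟩ := hcon
  -- take the largest index with nonzero coefficient
  have hne : ({i | g i ≠ 0} : Finset (Fin n)).Nonempty := ⟨i₀, by simpa using hi₀⟩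
  obtain ⟨d, hd, hdmax⟩ := Finset.exists_max_image _ id hne
  simp only [Finset.mem_filter, Finset.mem_univ, true_and] at hd
  have hmax : ∀ i : Fin n, (d : ℕ) < (i : ℕ) → g i = 0 := by
    intro i hi
    by_contra h
    have := hdmax i (by simpa using h)
    simp only [id_eq] at this
    omega
  -- every element in the span of the `y j` satisfies the order-`d` relation
  have hrel : ∀ j, ∑ i : Fin n, g i • HS.D^[(i : ℕ)] (y j) = 0 := by
    intro j
    have : ∑ i : Fin n, g i • HS.D^[(i : ℕ)] (y j)
        = ∑ l, (∑ i : Fin n, g i • B ^ (i : ℕ)) l j • y l := by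
      simp only [D_iter_eq y B hB]
      simp only [Finset.smul_sum, smul_smul, Matrix.sum_apply, Matrix.smul_apply,
        smul_eq_mul, Finset.sum_smul]
      rw [Finset.sum_comm]
    rw [this, hg]
    simp
  -- project onto the first `d` coefficients
  set f : Fin n → (Fin (d : ℕ) → k) := fun j t => y j (t : ℕ) with hf
  have hfind : LinearIndependent k f := by
    rw [Fintype.linearIndependent_iff]
    intro c hc
    set z : HS k := ∑ j, c j • y j with hz
    have hzlow : ∀ t : ℕ, t < (d : ℕ) → z t = 0 := by
      intro t ht
      have := congrFun hc ⟨t, ht⟩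
      rw [hz, hs_sum_apply]
      simpa [f, hs_sum_apply] using this
    have hDl : ∀ (i : ℕ) (w : HS k), HS.D^[i] w = ((Dlin k) ^ i) w := by
      intro i w
      rw [Module.End.pow_apply]
      rfl
    have hzrel : ∑ i : Fin n, g i • HS.D^[(i : ℕ)] z = 0 :=
      calc ∑ i : Fin n, g i • HS.D^[(i : ℕ)] z
          = ∑ i : Fin n, ∑ j, c j • (g i • HS.D^[(i : ℕ)] (y j)) := by
            refine Finset.sum_congr rfl fun i _ => ?_
            rw [hz]
            simp only [hDl, map_sum, map_smul, Finset.smul_sum]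
            exact Finset.sum_congr rfl fun j _ => smul_comm _ _ _
        _ = ∑ j, c j • ∑ i : Fin n, g i • HS.D^[(i : ℕ)] (y j) := by
            rw [Finset.sum_comm]
            simp [Finset.smul_sum]
        _ = 0 := by simp [hrel]
    have hzero : ∀ m, z m = 0 := by
      intro m
      induction m using Nat.strong_induction_on with
      | _ m ih =>
        rcases lt_or_ge m (d : ℕ) with h | h
        · exact hzlow m h
        · have h0 := congrFun hzrel (m - (d : ℕ))
          have hsum : ∑ i : Fin n, g i * z (m - (d : ℕ) + (i : ℕ)) = 0 := by
            simpa [hs_sum_apply, D_iter_apply] using h0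
          rw [Finset.sum_eq_single d] at hsum
          · have : m - (d : ℕ) + (d : ℕ) = m := by omega
            rw [this] at hsum
            exact (mul_eq_zero.mp hsum).resolve_left hd
          · intro i _ hid
            rcases lt_or_gt_of_ne (fun h => hid (Fin.ext h) : (i : ℕ) ≠ (d : ℕ)) with h' | h'
            · rw [ih _ (by omega), mul_zero]
            · rw [hmax i h', zero_mul]
          · simp
    have : z = 0 := funext hzero
    have := (Fintype.linearIndependent_iff.mp hind) c (by rw [← hz, this])
    exact this
  have hcard := hfind.fintype_card_le_finrank
  simp only [Fintype.card_fin, Module.finrank_fintype_fun_eq_card] at hcard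
  exact absurd hcard (by omega)

theorem aux_closure (B : Matrix (Fin n) (Fin n) k)
    (h1 : LinearIndependent k (fun i : Fin n => B ^ (i : ℕ))) :
    LinearIndependent (AlgebraicClosure k)
      (fun i : Fin n => B.map (algebraMap k (AlgebraicClosure k)) ^ (i : ℕ)) := by
  set K := AlgebraicClosure k
  set φ := algebraMap k K with hφ
  rw [Fintype.linearIndependent_iff]
  intro g hg i
  have hmap : ∀ m : ℕ, (B.map φ) ^ m = (B ^ m).map φ := by
    intro m
    rw [← RingHom.mapMatrix_apply, ← RingHom.mapMatrix_apply, map_pow]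
  have hEntry : ∀ p q, ∑ i : Fin n, g i * φ ((B ^ (i : ℕ)) p q) = 0 := by
    intro p q
    have h0 := congrFun (congrFun hg p) q
    simpa [hmap, Matrix.sum_apply, Matrix.smul_apply, Matrix.map_apply, smul_eq_mul] using h0
  have key : ∀ f : Module.Dual k K, f (g i) = 0 := by
    intro f
    have h2 : ∑ i : Fin n, f (g i) • B ^ (i : ℕ) = 0 := by
      ext p q
      rw [Matrix.sum_apply, Matrix.zero_apply]
      have h3 := congrArg f (hEntry p q)
      rw [map_sum, map_zero] at h3
      rw [← h3]
      refine Finset.sum_congr rfl fun l _ => ?_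
      rw [Matrix.smul_apply, smul_eq_mul, mul_comm (g l) (φ _), ← Algebra.smul_def,
        map_smul, smul_eq_mul, mul_comm]
    exact (Fintype.linearIndependent_iff.mp h1) _ h2 i
  exact (Module.forall_dual_apply_eq_zero_iff k (g i)).mp key

theorem aux_span (hn : 1 ≤ n) (B : Matrix (Fin n) (Fin n) k) :
    Submodule.span k (Set.range fun m : ℕ => B ^ m)
      = Submodule.span k (Set.range fun i : Fin n => B ^ (i : ℕ)) := by
  set Sp := Submodule.span k (Set.range fun i : Fin n => B ^ (i : ℕ)) with hSp
  have hlow : ∀ p : Polynomial k, p.natDegree < n → Polynomial.aeval B p ∈ Sp := by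
    intro p hp
    rw [Polynomial.aeval_eq_sum_range]
    refine Submodule.sum_mem _ fun i hi => Submodule.smul_mem _ _ ?_
    have hi' : i < n := lt_of_lt_of_le (Finset.mem_range.mp hi) hp
    exact Submodule.subset_span ⟨⟨i, hi'⟩, rfl⟩
  have hBn : B ^ n ∈ Sp := by
    have hch := B.aeval_self_charpoly
    have hdeg : B.charpoly.natDegree = n := by
      simpa using B.charpoly_natDegree_eq_dim
    have hdegd : B.charpoly.degree = (n : ℕ) := by
      simpa using B.charpoly_degree_eq_dim
    have hdegsub : (B.charpoly - Polynomial.X ^ n).natDegree < n := by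
      by_cases h0 : B.charpoly - Polynomial.X ^ n = 0
      · rw [h0]; simp only [Polynomial.natDegree_zero]; omega
      · have hlt : (B.charpoly - Polynomial.X ^ n).degree < ((n : ℕ) : WithBot ℕ) := by
          have := Polynomial.degree_sub_lt
            (p := B.charpoly) (q := Polynomial.X ^ n)
            (by rw [Polynomial.degree_X_pow]; exact hdegd)
            B.charpoly_monic.ne_zero
            (by rw [(Polynomial.monic_X_pow n).leadingCoeff, B.charpoly_monic.leadingCoeff])
          rwa [hdegd] at this
        exact (Polynomial.natDegree_lt_iff_degree_lt h0).mpr hlt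
    have hrepr : B.charpoly = Polynomial.X ^ n + (B.charpoly - Polynomial.X ^ n) := by
      ring
    have hsplit := congrArg (Polynomial.aeval B) hrepr
    rw [map_add, map_pow, Polynomial.aeval_X] at hsplit
    have : B ^ n = -(Polynomial.aeval B (B.charpoly - Polynomial.X ^ n)) := by
      rw [hch] at hsplit
      exact eq_neg_of_add_eq_zero_left hsplit.symm
    rw [this]
    exact Submodule.neg_mem _ (hlow _ hdegsub)
  have hmul : ∀ X ∈ Sp, X * B ∈ Sp := by
    intro X hX
    induction hX using Submodule.span_induction with
    | mem x hx =>
      obtain ⟨i, rfl⟩ := hx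
      rw [← pow_succ]
      have hle : (i : ℕ) + 1 < n ∨ (i : ℕ) + 1 = n := by
        have := i.isLt; omega
      rcases hle with h | h
      · exact Submodule.subset_span ⟨⟨(i : ℕ) + 1, h⟩, rfl⟩
      · rw [h]; exact hBn
    | zero => simp
    | add _ _ _ _ ha hb => rw [add_mul]; exact Submodule.add_mem _ ha hb
    | smul c _ _ h => rw [smul_mul_assoc]; exact Submodule.smul_mem _ _ h
  have key : ∀ m : ℕ, B ^ m ∈ Sp := by
    intro m
    induction m with
    | zero => exact Submodule.subset_span ⟨⟨0, hn⟩, rfl⟩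
    | succ m ih => rw [pow_succ]; exact hmul _ ih
  refine le_antisymm ?_ (Submodule.span_mono ?_)
  · rw [Submodule.span_le]
    rintro _ ⟨m, rfl⟩
    exact key m
  · rintro _ ⟨i, rfl⟩
    exact ⟨(i : ℕ), rfl⟩

end Aux

/-- with `∂Y = Y·B` for `k`-linearly independent solutions of `L(y) = 0`,
the matrices `I, B, …, B^{n-1}` are linearly independent over `k` (indeed over `k̄`),
and `Span_k{Bᵐ | m ∈ ℕ} = Span_k{I, B, …, B^{n-1}}`. -/
theorem stmt_14 {k : Type*} [Field k] (n : ℕ) (hn : 1 ≤ n) (a : Fin n → k)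
    (y : Fin n → HS k)
    (hsol : ∀ j, HS.D^[n] (y j) + ∑ i : Fin n, HS.const (a i) * HS.D^[(i : ℕ)] (y j) = 0)
    (hind : LinearIndependent k y)
    (B : Matrix (Fin n) (Fin n) k)
    (hB : ∀ j, HS.D (y j) = ∑ i, B i j • y i) :
    LinearIndependent k (fun i : Fin n => B ^ (i : ℕ)) ∧
    LinearIndependent (AlgebraicClosure k)
      (fun i : Fin n => B.map (algebraMap k (AlgebraicClosure k)) ^ (i : ℕ)) ∧
    Submodule.span k (Set.range fun m : ℕ => B ^ m)
      = Submodule.span k (Set.range fun i : Fin n => B ^ (i : ℕ)) := by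
  have h1 := aux_indep y hind B hB
  exact ⟨h1, aux_closure B h1, aux_span hn B⟩
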